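/- Let F be a field, k a nonnegative integer, and P ∈ F[X₁,…,Xₙ] a polynomial such that P(u) = 0 for all u ∈ {0,1}ⁿ with wt(u) ≤ k, and there exists v ∈ {0,1}ⁿ with wt(v) > k and P(v) ≠ 0. Then deg(P) > k. -/
import Mathlib

open Finset MvPolynomial

/-- The weight of a point of the hypercube: the number of coordinates equal to 1. -/
noncomputable def wt {F : Type*} [Field F] {n : ℕ} (u : Fin n → F) : ℕ :=
  Nat.card {i : Fin n // u i = 1}

private lemma superset_sum_zero {α : Type*} [DecidableEq α] {F : Type*} [Field F]
    {S A : Finset α} (hA : A ⊆ S) (hne : A ≠ S) :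
    ∑ T ∈ S.powerset.filter (fun T => A ⊆ T), (-1 : F) ^ T.card = 0 := by
  have hbij : ∑ T ∈ S.powerset.filter (fun T => A ⊆ T), (-1 : F) ^ T.card
      = ∑ R ∈ (S \ A).powerset, (-1 : F) ^ (R.card + A.card) := by
    refine Finset.sum_bij' (fun T _ => T \ A) (fun R _ => R ∪ A) ?_ ?_ ?_ ?_ ?_
    · intro T hT
      simp only [mem_filter, mem_powerset] at hT
      exact mem_powerset.mpr (sdiff_subset_sdiff hT.1 le_rfl)
    · intro R hR
      simp only [mem_powerset] at hR
      refine mem_filter.mpr ⟨mem_powerset.mpr ?_, subset_union_right⟩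
      exact union_subset (hR.trans (sdiff_subset)) hA
    · intro T hT
      simp only [mem_filter, mem_powerset] at hT
      exact sdiff_union_of_subset hT.2
    · intro R hR
      simp only [mem_powerset] at hR
      have : Disjoint R A := disjoint_of_subset_left hR sdiff_disjoint
      exact union_sdiff_cancel_right this
    · intro T hT
      simp only [mem_filter, mem_powerset] at hT
      congr 1
      rw [card_sdiff_of_subset hT.2, Nat.sub_add_cancel (card_le_card hT.2)]
  rw [hbij]
  have hne' : (S \ A).Nonempty := by
    rw [sdiff_nonempty]
    intro h
    exact hne (subset_antisymm hA h)
  have hz : (∑ R ∈ (S \ A).powerset, (-1 : ℤ) ^ R.card) = 0 :=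
    Finset.sum_powerset_neg_one_pow_card_of_nonempty hne'
  calc ∑ R ∈ (S \ A).powerset, (-1 : F) ^ (R.card + A.card)
      = (∑ R ∈ (S \ A).powerset, (-1 : F) ^ R.card) * (-1 : F) ^ A.card := by
        rw [Finset.sum_mul]; simp [pow_add]
    _ = 0 := by
        have : (∑ R ∈ (S \ A).powerset, (-1 : F) ^ R.card)
            = ((∑ R ∈ (S \ A).powerset, (-1 : ℤ) ^ R.card : ℤ) : F) := by
          push_cast; rfl
        rw [this, hz]; simp

private lemma key_sum {F : Type*} [Field F] {n : ℕ} (P : MvPolynomial (Fin n) F)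
    (S : Finset (Fin n)) (h : P.totalDegree < S.card) :
    ∑ T ∈ S.powerset,
      (-1 : F) ^ T.card * MvPolynomial.eval (fun i => if i ∈ T then (1:F) else 0) P = 0 := by
  classical
  simp_rw [MvPolynomial.eval_eq, Finset.mul_sum]
  rw [Finset.sum_comm]
  apply Finset.sum_eq_zero
  intro d hd
  have hprod : ∀ T : Finset (Fin n),
      (∏ i ∈ d.support, (if i ∈ T then (1:F) else 0) ^ d i)
        = if d.support ⊆ T then 1 else 0 := by
    intro T
    by_cases hsub : d.support ⊆ T
    · rw [if_pos hsub]
      apply Finset.prod_eq_one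
      intro i hi
      rw [if_pos (hsub hi), one_pow]
    · rw [if_neg hsub]
      obtain ⟨i, hi, hiT⟩ := Finset.not_subset.mp hsub
      apply Finset.prod_eq_zero hi
      rw [if_neg hiT, zero_pow]
      simpa using hi
  simp_rw [hprod]
  by_cases hAS : d.support ⊆ S
  · have hdeg : d.support.card < S.card := by
      calc d.support.card = ∑ i ∈ d.support, 1 := by simp
          _ ≤ ∑ i ∈ d.support, d i := Finset.sum_le_sum
              (fun i hi => Nat.one_le_iff_ne_zero.mpr (by simpa using hi))
          _ ≤ P.totalDegree := MvPolynomial.le_totalDegree hd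
          _ < S.card := h
    have hne : d.support ≠ S := fun hEq => absurd (hEq ▸ hdeg) (lt_irrefl _)
    have := superset_sum_zero (F := F) hAS hne
    calc ∑ T ∈ S.powerset, (-1:F)^T.card * (P.coeff d * if d.support ⊆ T then 1 else 0)
        = ∑ T ∈ S.powerset, (if d.support ⊆ T then ((-1:F)^T.card * P.coeff d) else 0) := by
          apply Finset.sum_congr rfl; intro T _; split <;> simp
      _ = ∑ T ∈ S.powerset.filter (fun T => d.support ⊆ T), ((-1:F)^T.card * P.coeff d) := by
          rw [Finset.sum_filter]
      _ = (∑ T ∈ S.powerset.filter (fun T => d.support ⊆ T), (-1:F)^T.card) * P.coeff d := by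
          rw [Finset.sum_mul]
      _ = 0 := by rw [this, zero_mul]
  · apply Finset.sum_eq_zero
    intro T hT
    have : ¬ d.support ⊆ T := fun hsub => hAS (hsub.trans (mem_powerset.mp hT))
    rw [if_neg this, mul_zero, mul_zero]

private lemma wt_indicator {F : Type*} [Field F] {n : ℕ} (T : Finset (Fin n)) :
    wt (fun i => if i ∈ T then (1:F) else 0) = T.card := by
  unfold wt
  have : {i : Fin n // (if i ∈ T then (1:F) else 0) = 1} ≃ {i : Fin n // i ∈ T} := by
    apply Equiv.subtypeEquivRight
    intro i
    by_cases h : i ∈ T <;> simp [h]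
  rw [Nat.card_congr this]
  simp [Nat.card_eq_fintype_card]

theorem hegedus {F : Type*} [Field F] {n k : ℕ}
    (P : MvPolynomial (Fin n) F)
    (hvanish : ∀ u : Fin n → F, (∀ i, u i = 0 ∨ u i = 1) → wt u ≤ k →
      MvPolynomial.eval u P = 0)
    (hex : ∃ v : Fin n → F, (∀ i, v i = 0 ∨ v i = 1) ∧ k < wt v ∧
      MvPolynomial.eval v P ≠ 0) :
    k < P.totalDegree := by
  classical
  by_contra hdeg
  push_neg at hdeg
  -- translate v to a Finset
  obtain ⟨v, hbool, hwtv, hne⟩ := hex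
  set χ : Finset (Fin n) → (Fin n → F) := fun T i => if i ∈ T then (1:F) else 0 with hχ
  have hboolind : ∀ T : Finset (Fin n), ∀ i, χ T i = 0 ∨ χ T i = 1 := by
    intro T i; by_cases h : i ∈ T <;> simp [hχ, h]
  have hv : v = χ (Finset.univ.filter (fun i => v i = 1)) := by
    funext i
    by_cases h : v i = 1
    · simp [hχ, h]
    · rcases hbool i with h0 | h1
      · simp [hχ, h, h0]
      · exact absurd h1 h
  -- the set of Finsets where P doesn't vanish
  set 𝒜 : Finset (Finset (Fin n)) :=
    Finset.univ.filter (fun T => MvPolynomial.eval (χ T) P ≠ 0) with h𝒜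
  have h𝒜ne : 𝒜.Nonempty := by
    refine ⟨Finset.univ.filter (fun i => v i = 1), ?_⟩
    simp only [h𝒜, Finset.mem_filter, Finset.mem_univ, true_and]
    rw [← hv]; exact hne
  obtain ⟨S, hS𝒜, hSmin⟩ := Finset.exists_min_image 𝒜 Finset.card h𝒜ne
  have hSne : MvPolynomial.eval (χ S) P ≠ 0 := by
    simpa [h𝒜] using hS𝒜
  have hSk : k < S.card := by
    by_contra hk
    push_neg at hk
    exact hSne (hvanish (χ S) (hboolind S) (by rw [wt_indicator]; exact hk))
  have hzero := key_sum P S (lt_of_le_of_lt hdeg hSk)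
  have : ∑ T ∈ S.powerset, (-1:F)^T.card * MvPolynomial.eval (χ T) P
      = (-1:F)^S.card * MvPolynomial.eval (χ S) P := by
    rw [← Finset.sum_subset (Finset.singleton_subset_iff.mpr (Finset.mem_powerset_self S))]
    · rw [Finset.sum_singleton]
    · intro T hT hTne
      simp only [Finset.mem_singleton] at hTne
      have hTS : T ⊆ S := Finset.mem_powerset.mp hT
      have hTlt : T.card < S.card := Finset.card_lt_card (lt_of_le_of_ne hTS hTne)
      have : MvPolynomial.eval (χ T) P = 0 := by
        by_cases hTk : T.card ≤ k
        · exact hvanish (χ T) (hboolind T) (by rw [wt_indicator]; exact hTk)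
        · by_contra hc
          have hT𝒜 : T ∈ 𝒜 := by simp [h𝒜, hc]
          exact absurd (hSmin T hT𝒜) (not_le_of_gt hTlt)
      rw [this, mul_zero]
  rw [this] at hzero
  rcases mul_eq_zero.mp hzero with h | h
  · exact absurd h (pow_ne_zero _ (neg_ne_zero.mpr one_ne_zero))
  · exact hSne h
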